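/- Let h be a real number with |h| < 1, let Ω_h be the 2×2 matrix with ones on the diagonal and h on the off-diagonal, and let 0 < ϑ < r. Then the minimum of ρ(D, F; Ω_h) over all pairs of disjoint subsets D, F of {1, 2} with D nonempty equals min{ (ϑ+r)²/(4r), ϑ + (1−|h|)r/2, 2ϑ + (1/4)·[max(√((1−h²)r) − ϑ/√((1−h²)r), 0)]² }. -/

import Mathlib

open Matrix

/-- `ω(D,F;Ω)`: the minimum (infimum) of
`ξᵀ(Ω_{D,D} − Ω_{D,F}(Ω_{F,F})⁻¹Ω_{F,D})ξ` over vectors `ξ ∈ ℝ^D` with `|ξ_i| ≥ 1`. -/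
noncomputable def omegaDF {p : ℕ} (Ω : Matrix (Fin p) (Fin p) ℝ)
    (D F : Finset (Fin p)) : ℝ :=
  sInf {q : ℝ | ∃ ξ : ↥D → ℝ, (∀ i, 1 ≤ |ξ i|) ∧
    q = ξ ⬝ᵥ ((Ω.submatrix (fun i : ↥D => (i : Fin p)) (fun j : ↥D => (j : Fin p))
        - Ω.submatrix (fun i : ↥D => (i : Fin p)) (fun j : ↥F => (j : Fin p))
          * (Ω.submatrix (fun i : ↥F => (i : Fin p)) (fun j : ↥F => (j : Fin p)))⁻¹
          * Ω.submatrix (fun i : ↥F => (i : Fin p)) (fun j : ↥D => (j : Fin p))) *ᵥ ξ)}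

/-- `ρ(D,F;Ω)` with parameters `ϑ, r`. -/
noncomputable def rhoDF {p : ℕ} (Ω : Matrix (Fin p) (Fin p) ℝ) (ϑ r : ℝ)
    (D F : Finset (Fin p)) : ℝ :=
  if Even D.card then
    ((D.card : ℝ) + 2 * F.card) * ϑ / 2 + omegaDF Ω D F * r / 4
  else
    ((D.card : ℝ) + 2 * F.card) * ϑ / 2 + ϑ / 2 +
      (max (Real.sqrt (omegaDF Ω D F * r) - ϑ / Real.sqrt (omegaDF Ω D F * r)) 0) ^ 2 / 4

/-- For the 2×2 matrix `Ω_h` with ones on the diagonal and `h`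
(`|h| < 1`) off the diagonal, and `0 < ϑ < r`, the minimum of `ρ(D,F;Ω_h)` over all pairs
of disjoint subsets `D, F ⊆ {1,2}` with `D` nonempty equals
`min{(ϑ+r)²/(4r), ϑ + (1−|h|)r/2, 2ϑ + (1/4)[(√((1−h²)r) − ϑ/√((1−h²)r))₊]²}`. -/
lemma sInf_c_mul_sq (c : ℝ) (hc : 0 ≤ c) :
    sInf {q : ℝ | ∃ a : ℝ, 1 ≤ |a| ∧ q = c * a ^ 2} = c := by
  apply IsLeast.csInf_eq
  constructor
  · exact ⟨1, by simp, by ring⟩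
  · rintro q ⟨a, ha, rfl⟩
    have h1 : 1 ≤ a ^ 2 := by nlinarith [sq_abs a, abs_nonneg a]
    nlinarith

lemma sInf_quad_singleton {p : ℕ} (i : Fin p)
    (M : Matrix ↥({i} : Finset (Fin p)) ↥({i} : Finset (Fin p)) ℝ)
    (c : ℝ) (hc : 0 ≤ c)
    (hM : M ⟨i, Finset.mem_singleton_self i⟩ ⟨i, Finset.mem_singleton_self i⟩ = c) :
    sInf {q : ℝ | ∃ ξ : ↥({i} : Finset (Fin p)) → ℝ, (∀ j, 1 ≤ |ξ j|) ∧ q = ξ ⬝ᵥ (M *ᵥ ξ)} = c := by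
  haveI : Unique ↥({i} : Finset (Fin p)) :=
    ⟨⟨⟨i, Finset.mem_singleton_self i⟩⟩, fun a => Subtype.ext (Finset.mem_singleton.mp a.2)⟩
  have hset : {q : ℝ | ∃ ξ : ↥({i} : Finset (Fin p)) → ℝ, (∀ j, 1 ≤ |ξ j|) ∧ q = ξ ⬝ᵥ (M *ᵥ ξ)}
      = {q : ℝ | ∃ a : ℝ, 1 ≤ |a| ∧ q = c * a ^ 2} := by
    ext q
    simp only [Set.mem_setOf_eq]
    constructor
    · rintro ⟨ξ, hξ, rfl⟩
      refine ⟨ξ default, hξ _, ?_⟩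
      have hd : (default : ↥({i} : Finset (Fin p))) = ⟨i, Finset.mem_singleton_self i⟩ :=
        (Unique.eq_default (⟨i, Finset.mem_singleton_self i⟩ : ↥({i} : Finset (Fin p)))).symm
      simp [dotProduct, mulVec, Fintype.sum_unique, hd, hM]
      ring
    · rintro ⟨a, ha, rfl⟩
      refine ⟨fun _ => a, fun _ => ha, ?_⟩
      have hd : (default : ↥({i} : Finset (Fin p))) = ⟨i, Finset.mem_singleton_self i⟩ :=
        (Unique.eq_default (⟨i, Finset.mem_singleton_self i⟩ : ↥({i} : Finset (Fin p)))).symm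
      simp [dotProduct, mulVec, Fintype.sum_unique, hd, hM]
      ring
  rw [hset]
  exact sInf_c_mul_sq c hc

lemma inv_apply_unique {n : Type*} [Fintype n] [DecidableEq n] [Unique n]
    (A : Matrix n n ℝ) (a b : n) : A⁻¹ a b = (A a b)⁻¹ := by
  have ha : a = default := Unique.eq_default a
  have hb : b = default := Unique.eq_default b
  subst ha hb
  rw [Matrix.inv_def, Matrix.adjugate_subsingleton, Matrix.det_unique]
  simp [Ring.inverse_eq_inv']

lemma omega_single_empty (h : ℝ) (i : Fin 2) : omegaDF !![1,h;h,1] {i} ∅ = 1 := by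
  rw [omegaDF]
  apply sInf_quad_singleton i _ 1 zero_le_one
  haveI : IsEmpty ↥(∅ : Finset (Fin 2)) := Finset.isEmpty_coe_sort.mpr rfl
  simp [Matrix.sub_apply, Matrix.mul_apply, Matrix.submatrix_apply]
  fin_cases i <;> simp

lemma omega_single_single (h : ℝ) (hh : |h| < 1) (i j : Fin 2) (hij : i ≠ j) :
    omegaDF !![1,h;h,1] {i} {j} = 1 - h ^ 2 := by
  have hc : (0:ℝ) ≤ 1 - h ^ 2 := by nlinarith [sq_abs h, abs_nonneg h]
  rw [omegaDF]
  apply sInf_quad_singleton i _ (1 - h ^ 2) hc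
  haveI : Unique ↥({j} : Finset (Fin 2)) :=
    ⟨⟨⟨j, Finset.mem_singleton_self j⟩⟩, fun a => Subtype.ext (Finset.mem_singleton.mp a.2)⟩
  have hd : ((default : ↥({j} : Finset (Fin 2))) : Fin 2) = j := by
    exact Finset.mem_singleton.mp (default : ↥({j} : Finset (Fin 2))).2
  simp only [Matrix.sub_apply, Matrix.mul_apply, Matrix.submatrix_apply,
    Fintype.sum_unique, inv_apply_unique, hd]
  fin_cases i <;> fin_cases j <;> simp_all <;> ring

lemma omega_pair (h : ℝ) (hh : |h| < 1) :
    omegaDF !![1,h;h,1] ({0,1} : Finset (Fin 2)) ∅ = 2 - 2 * |h| := by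
  haveI : IsEmpty ↥(∅ : Finset (Fin 2)) := Finset.isEmpty_coe_sort.mpr rfl
  rw [omegaDF]
  have hM : ((!![1,h;h,1]).submatrix (fun i : ↥({0,1} : Finset (Fin 2)) => (i : Fin 2))
          (fun j : ↥({0,1} : Finset (Fin 2)) => (j : Fin 2))
        - (!![1,h;h,1]).submatrix (fun i : ↥({0,1} : Finset (Fin 2)) => (i : Fin 2))
            (fun j : ↥(∅ : Finset (Fin 2)) => (j : Fin 2))
          * ((!![1,h;h,1]).submatrix (fun i : ↥(∅ : Finset (Fin 2)) => (i : Fin 2))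
              (fun j : ↥(∅ : Finset (Fin 2)) => (j : Fin 2)))⁻¹
          * (!![1,h;h,1]).submatrix (fun i : ↥(∅ : Finset (Fin 2)) => (i : Fin 2))
              (fun j : ↥({0,1} : Finset (Fin 2)) => (j : Fin 2)))
      = (!![1,h;h,1]).submatrix (fun i : ↥({0,1} : Finset (Fin 2)) => (i : Fin 2))
          (fun j : ↥({0,1} : Finset (Fin 2)) => (j : Fin 2)) := by
    ext a b
    simp [Matrix.mul_apply]
  simp only [hM]
  have huniv : (Finset.univ : Finset ↥({0,1} : Finset (Fin 2)))
      = {⟨0, by decide⟩, ⟨1, by decide⟩} := by decide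
  have hne : (⟨0, by decide⟩ : ↥({0,1} : Finset (Fin 2))) ≠ ⟨1, by decide⟩ := by decide
  have hset : {q : ℝ | ∃ ξ : ↥({0,1} : Finset (Fin 2)) → ℝ, (∀ i, 1 ≤ |ξ i|) ∧
        q = ξ ⬝ᵥ ((!![1,h;h,1]).submatrix (fun i : ↥({0,1} : Finset (Fin 2)) => (i : Fin 2))
          (fun j : ↥({0,1} : Finset (Fin 2)) => (j : Fin 2)) *ᵥ ξ)}
      = {q : ℝ | ∃ a b : ℝ, 1 ≤ |a| ∧ 1 ≤ |b| ∧ q = a^2 + b^2 + 2*h*a*b} := by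
    ext q
    simp only [Set.mem_setOf_eq]
    constructor
    · rintro ⟨ξ, hξ, rfl⟩
      refine ⟨ξ ⟨0, by decide⟩, ξ ⟨1, by decide⟩, hξ _, hξ _, ?_⟩
      simp [dotProduct, mulVec, huniv, Finset.sum_pair hne]
      ring
    · rintro ⟨a, b, ha, hb, rfl⟩
      refine ⟨fun d => if (d : Fin 2) = 0 then a else b, ?_, ?_⟩
      · intro jj
        by_cases hj : (jj : Fin 2) = 0 <;> simp [hj, ha, hb]
      · simp [dotProduct, mulVec, huniv, Finset.sum_pair hne]
        ring
  rw [hset]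
  apply IsLeast.csInf_eq
  constructor
  · refine ⟨1, if 0 ≤ h then -1 else 1, by simp, by split <;> simp, ?_⟩
    split_ifs with hs
    · rw [abs_of_nonneg hs]; ring
    · rw [abs_of_neg (lt_of_not_ge hs)]; ring
  · rintro q ⟨a, b, ha, hb, rfl⟩
    have hab : 1 ≤ |a| * |b| := by nlinarith [abs_nonneg a, abs_nonneg b]
    nlinarith [sq_abs a, sq_abs b, neg_abs_le (h*(a*b)), abs_mul h (a*b), abs_mul a b,
      sq_nonneg (|a|-|b|), hab, hh.le, abs_nonneg h]

lemma rho_single_empty (h : ℝ) (ϑ r : ℝ) (h0 : 0 < ϑ) (hr : ϑ < r) (i : Fin 2) :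
    rhoDF !![1,h;h,1] ϑ r {i} ∅ = (ϑ + r) ^ 2 / (4 * r) := by
  have hr0 : 0 < r := h0.trans hr
  rw [rhoDF, omega_single_empty]
  simp only [Finset.card_singleton, Finset.card_empty]
  rw [if_neg (by decide), one_mul]
  have hsq : Real.sqrt r ^ 2 = r := Real.sq_sqrt hr0.le
  have hs0 : 0 < Real.sqrt r := Real.sqrt_pos.mpr hr0
  have hrepr : Real.sqrt r - ϑ / Real.sqrt r = (r - ϑ) / Real.sqrt r := by
    rw [eq_div_iff hs0.ne', sub_mul, div_mul_cancel₀ _ hs0.ne']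
    linear_combination hsq
  have hpos : 0 ≤ Real.sqrt r - ϑ / Real.sqrt r := by
    rw [hrepr]
    exact div_nonneg (by linarith) hs0.le
  rw [max_eq_left hpos, hrepr, div_pow, hsq]
  push_cast
  field_simp
  ring

lemma rho_single_single (h : ℝ) (hh : |h| < 1) (ϑ r : ℝ) (i j : Fin 2) (hij : i ≠ j) :
    rhoDF !![1,h;h,1] ϑ r {i} {j} = 2 * ϑ +
      (max (Real.sqrt ((1 - h ^ 2) * r) - ϑ / Real.sqrt ((1 - h ^ 2) * r)) 0) ^ 2 / 4 := by
  rw [rhoDF, omega_single_single h hh i j hij]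
  simp only [Finset.card_singleton]
  rw [if_neg (by decide)]
  push_cast
  ring

lemma rho_pair (h : ℝ) (hh : |h| < 1) (ϑ r : ℝ) :
    rhoDF !![1,h;h,1] ϑ r ({0,1} : Finset (Fin 2)) ∅ = ϑ + (1 - |h|) * r / 2 := by
  rw [rhoDF, omega_pair h hh]
  rw [if_pos (by decide)]
  rw [show (({0,1} : Finset (Fin 2)).card : ℝ) = 2 by norm_num]
  simp only [Finset.card_empty]
  push_cast
  ring

theorem rho_min_two_by_two (h : ℝ) (hh : |h| < 1) (ϑ r : ℝ) (h0 : 0 < ϑ) (hr : ϑ < r) :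
    IsLeast {x : ℝ | ∃ D F : Finset (Fin 2), D.Nonempty ∧ Disjoint D F ∧
        x = rhoDF !![1, h; h, 1] ϑ r D F}
      (min ((ϑ + r) ^ 2 / (4 * r))
        (min (ϑ + (1 - |h|) * r / 2)
          (2 * ϑ + (max (Real.sqrt ((1 - h ^ 2) * r)
              - ϑ / Real.sqrt ((1 - h ^ 2) * r)) 0) ^ 2 / 4))) := by
  set v1 : ℝ := (ϑ + r) ^ 2 / (4 * r) with hv1
  set v2 : ℝ := ϑ + (1 - |h|) * r / 2 with hv2
  set v3 : ℝ := 2 * ϑ + (max (Real.sqrt ((1 - h ^ 2) * r)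
      - ϑ / Real.sqrt ((1 - h ^ 2) * r)) 0) ^ 2 / 4 with hv3
  have hS : {x : ℝ | ∃ D F : Finset (Fin 2), D.Nonempty ∧ Disjoint D F ∧
      x = rhoDF !![1, h; h, 1] ϑ r D F} = {v1, v2, v3} := by
    ext x
    simp only [Set.mem_setOf_eq, Set.mem_insert_iff, Set.mem_singleton_iff]
    constructor
    · rintro ⟨D, F, hD, hDF, rfl⟩
      fin_cases D
      · exact absurd hD (by simp)
      · fin_cases F
        · left; exact rho_single_empty h ϑ r h0 hr 0
        · exact absurd hDF (by decide)
        · right; right; exact rho_single_single h hh ϑ r 0 1 (by decide)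
        · exact absurd hDF (by decide)
      · fin_cases F
        · left; exact rho_single_empty h ϑ r h0 hr 1
        · right; right; exact rho_single_single h hh ϑ r 1 0 (by decide)
        · exact absurd hDF (by decide)
        · exact absurd hDF (by decide)
      · fin_cases F
        · right; left; exact rho_pair h hh ϑ r
        · exact absurd hDF (by decide)
        · exact absurd hDF (by decide)
        · exact absurd hDF (by decide)
    · rintro (rfl | rfl | rfl)
      · exact ⟨{0}, ∅, ⟨0, by decide⟩, by decide, (rho_single_empty h ϑ r h0 hr 0).symm⟩
      · exact ⟨{0,1}, ∅, ⟨0, by decide⟩, by decide, (rho_pair h hh ϑ r).symm⟩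
      · exact ⟨{0}, {1}, ⟨0, by decide⟩, by decide,
          (rho_single_single h hh ϑ r 0 1 (by decide)).symm⟩
  rw [hS]
  constructor
  · simp only [Set.mem_insert_iff, Set.mem_singleton_iff]
    rcases le_total v1 (min v2 v3) with h1 | h1
    · left; exact min_eq_left h1
    · rcases le_total v2 v3 with h2 | h2
      · right; left; rw [min_eq_right h1, min_eq_left h2]
      · right; right; rw [min_eq_right h1, min_eq_right h2]
  · rintro x (rfl | rfl | rfl)
    · exact min_le_left _ _
    · exact le_trans (min_le_right _ _) (min_le_left _ _)
    · exact le_trans (min_le_right _ _) (min_le_right _ _)
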